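/- Let V be a finite set of points in ℝ² contained in the closed annulus {x : 2 ≤ ‖x‖ ≤ 2.52}, with ‖u - v‖ ≥ 2 for all distinct u, v ∈ V. Then ∑_{v ∈ V} L(‖v‖/2) ≤ 6, where L(h) = (1.26 - h)/0.26 for h ≤ 1.26 and 0 otherwise. Equality holds if and only if V is the vertex set of a regular hexagon of circumradius 2 centered at the origin. -/

import Mathlib

noncomputable def Ltrunc (h : ℝ) : ℝ :=
  if h ≤ 1.26 then (1.26 - h) / 0.26 else 0

open Real Complex


lemma chord (s : ℝ) (h0 : 0 ≤ s) (h2 : s ≤ 2) : 1 - s/4 ≤ Real.cos (π * s / 6) := by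
  have hcc := strictConcaveOn_cos_Icc.concaveOn
  have h1 : (0:ℝ) ∈ Set.Icc (-(π/2)) (π/2) := by
    constructor <;> nlinarith [pi_pos]
  have h2' : (π/3:ℝ) ∈ Set.Icc (-(π/2)) (π/2) := by
    constructor <;> nlinarith [pi_pos]
  have ht : (0:ℝ) ≤ 1 - s/2 := by linarith
  have ht' : (0:ℝ) ≤ s/2 := by linarith
  have hsum : (1 - s/2) + s/2 = 1 := by ring
  have := hcc.2 h1 h2' ht ht' hsum
  simp only [smul_eq_mul] at this
  have heq : (1 - s/2) * 0 + s/2 * (π/3) = π * s / 6 := by ring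
  rw [heq] at this
  rw [Real.cos_zero, Real.cos_pi_div_three] at this
  linarith

lemma chord_strict (s : ℝ) (h0 : 0 < s) (h2 : s < 2) : 1 - s/4 < Real.cos (π * s / 6) := by
  have hcc := strictConcaveOn_cos_Icc
  have h1 : (0:ℝ) ∈ Set.Icc (-(π/2)) (π/2) := by
    constructor <;> nlinarith [pi_pos]
  have h2' : (π/3:ℝ) ∈ Set.Icc (-(π/2)) (π/2) := by
    constructor <;> nlinarith [pi_pos]
  have hne : (0:ℝ) ≠ π/3 := by nlinarith [pi_pos]
  have ht : (0:ℝ) < 1 - s/2 := by linarith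
  have ht' : (0:ℝ) < s/2 := by linarith
  have hsum : (1 - s/2) + s/2 = 1 := by ring
  have := hcc.2 h1 h2' hne ht ht' hsum
  simp only [smul_eq_mul] at this
  have heq : (1 - s/2) * 0 + s/2 * (π/3) = π * s / 6 := by ring
  rw [heq] at this
  rw [Real.cos_zero, Real.cos_pi_div_three] at this
  linarith

noncomputable def LL (r : ℝ) : ℝ := (1.26 - r/2)/0.26

lemma LL_eq (r : ℝ) : LL r = (63 - 25*r)/13 := by
  unfold LL; rw [div_eq_div_iff (by norm_num) (by norm_num)]; ring

lemma LL_nonneg {r : ℝ} (h : r ≤ 2.52) : 0 ≤ LL r := by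
  rw [LL_eq]; apply div_nonneg _ (by norm_num); linarith

lemma LL_le_one {r : ℝ} (h : 2 ≤ r) : LL r ≤ 1 := by
  rw [LL_eq, div_le_one (by norm_num)]; linarith

lemma LL_lt_one {r : ℝ} (h : 2 < r) : LL r < 1 := by
  rw [LL_eq, div_lt_one (by norm_num)]; linarith

lemma LL_two : LL 2 = 1 := by rw [LL_eq]; norm_num

lemma poly_ineq (r s : ℝ) (hr : 2 ≤ r) (hr' : r ≤ 2.52) (hs : 2 ≤ s) (hs' : s ≤ 2.52) :
    (r^2+s^2-4)/2 ≤ r*s*(1 - (LL r + LL s)/4) := by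
  rw [LL_eq, LL_eq]
  have key : 26*(r^2+s^2-4) ≤ r*s*(25*(r+s)-74) := by
    nlinarith [mul_nonneg (sub_nonneg.2 hr) (sub_nonneg.2 hs), sq_nonneg (r-s),
      sq_nonneg (r-2), sq_nonneg (s-2),
      mul_nonneg (mul_nonneg (sub_nonneg.2 hr) (sub_nonneg.2 hs))
        (by linarith : (0:ℝ) ≤ (r-2)+(s-2))]
  have heq : r*s*(1 - ((63 - 25*r)/13 + (63 - 25*s)/13)/4) = r*s*(25*(r+s)-74)/52 := by
    ring
  rw [heq]; linarith

lemma pair_ge (r s θ : ℝ) (hr : 2 ≤ r) (hr' : r ≤ 2.52) (hs : 2 ≤ s) (hs' : s ≤ 2.52)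
    (hc : r*s*Real.cos θ ≤ (r^2+s^2-4)/2) (hθpos : 0 < θ) (hθlt : θ < 2*π) :
    π/6 * (LL r + LL s) ≤ θ := by
  set S := LL r + LL s with hS
  have hS0 : 0 ≤ S := by have := LL_nonneg hr'; have := LL_nonneg hs'; linarith
  have hS2 : S ≤ 2 := by have := LL_le_one hr; have := LL_le_one hs; linarith
  have hrs : 0 < r*s := by nlinarith
  have hcos : Real.cos θ ≤ 1 - S/4 := by
    have h2 := poly_ineq r s hr hr' hs hs'
    rw [← hS] at h2
    have h3 := hc.trans h2
    nlinarith
  have hchord := chord S hS0 hS2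
  have hkey : Real.cos θ ≤ Real.cos (π * S / 6) := hcos.trans hchord
  have hgoal : π * S / 6 ≤ θ := by
    rcases le_or_gt θ π with hθπ | hθπ
    · by_contra hlt
      push_neg at hlt
      have hmem1 : θ ∈ Set.Icc 0 π := ⟨hθpos.le, hθπ⟩
      have hmem2 : π * S / 6 ∈ Set.Icc 0 π := by
        constructor
        · positivity
        · nlinarith [pi_pos]
      have := Real.strictAntiOn_cos hmem1 hmem2 hlt
      linarith
    · nlinarith [pi_pos]
  linarith

lemma pair_eq (r s θ : ℝ) (hr : 2 ≤ r) (hr' : r ≤ 2.52) (hs : 2 ≤ s) (hs' : s ≤ 2.52)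
    (hc : r*s*Real.cos θ ≤ (r^2+s^2-4)/2) (hθpos : 0 < θ)
    (heq : θ = π/6 * (LL r + LL s)) : r = 2 ∧ s = 2 := by
  set S := LL r + LL s with hS
  have hS2 : S ≤ 2 := by have := LL_le_one hr; have := LL_le_one hs; linarith
  have hS0 : 0 < S := by
    by_contra h
    push_neg at h
    have : θ ≤ 0 := by rw [heq]; nlinarith [pi_pos]
    linarith
  by_contra hne
  have hSlt : S < 2 := by
    have h1 := LL_le_one hr
    have h2 := LL_le_one hs
    rcases not_and_or.mp hne with h | h
    · have := LL_lt_one (lt_of_le_of_ne hr (Ne.symm h)); linarith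
    · have := LL_lt_one (lt_of_le_of_ne hs (Ne.symm h)); linarith
  have hrs : 0 < r*s := by nlinarith
  have hcos : Real.cos θ ≤ 1 - S/4 := by
    have h2 := poly_ineq r s hr hr' hs hs'
    rw [← hS] at h2
    have h3 := hc.trans h2
    nlinarith
  have hchord := chord_strict S hS0 hSlt
  have hθ' : θ = π * S / 6 := by rw [heq]; ring
  rw [hθ'] at hcos
  linarith

lemma cos_bound (u v : ℂ) (hu : u ≠ 0) (hv : v ≠ 0) (hd : 2 ≤ ‖u - v‖) :
    ‖u‖*‖v‖*Real.cos (Complex.arg v - Complex.arg u) ≤ (‖u‖^2+‖v‖^2-4)/2 := by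
  have hau : ‖u‖ ≠ 0 := norm_ne_zero_iff.mpr hu
  have hav : ‖v‖ ≠ 0 := norm_ne_zero_iff.mpr hv
  have h1 : Real.cos (Complex.arg v - Complex.arg u)
      = (v.re/‖v‖)*(u.re/‖u‖) + (v.im/‖v‖)*(u.im/‖u‖) := by
    rw [Real.cos_sub, Complex.cos_arg hv, Complex.cos_arg hu, Complex.sin_arg, Complex.sin_arg]
  have h2 : ‖u‖*‖v‖*Real.cos (Complex.arg v - Complex.arg u) = u.re*v.re + u.im*v.im := by
    rw [h1]
    field_simp
  have h3 : ‖u - v‖^2 = ‖u‖^2 + ‖v‖^2 - 2*(u.re*v.re + u.im*v.im) := by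
    rw [
      Complex.sq_norm, Complex.sq_norm, Complex.sq_norm, Complex.normSq_apply,
      Complex.normSq_apply, Complex.normSq_apply, Complex.sub_re, Complex.sub_im]
    ring
  have h4 : (4:ℝ) ≤ ‖u - v‖^2 := by nlinarith [norm_nonneg (u-v)]
  rw [h2]; nlinarith


lemma arg_inj_aux (u v : ℂ) (hu2 : 2 ≤ ‖u‖) (hu' : ‖u‖ ≤ 2.52) (hv2 : 2 ≤ ‖v‖) (hv' : ‖v‖ ≤ 2.52)
    (ha : Complex.arg u = Complex.arg v) (hd : u ≠ v → 2 ≤ ‖u - v‖) : u = v := by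
  by_contra hne
  have h2 := hd hne
  have h1 : u - v = ((‖u‖ : ℝ) - ‖v‖) * Complex.exp (Complex.arg v * Complex.I) := by
    conv_lhs => rw [← Complex.norm_mul_exp_arg_mul_I u, ← Complex.norm_mul_exp_arg_mul_I v, ha]
    push_cast
    ring
  have h3 : ‖u - v‖ = |‖u‖ - ‖v‖| := by
    rw [h1, norm_mul, Complex.norm_exp_ofReal_mul_I, mul_one]
    rw [← Real.norm_eq_abs]; exact_mod_cast Complex.norm_real _
  have hun : ‖u‖ = ‖u‖ := rfl
  have hvn : ‖v‖ = ‖v‖ := rfl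
  rw [h3] at h2
  rw [hun] at hu' hu2
  rw [hvn] at hv' hv2
  have : |‖u‖ - ‖v‖| ≤ 0.52 := by
    rw [abs_le]; constructor <;> linarith
  linarith

lemma hex_inj (u : ℂ) (hu : u ≠ 0) :
    Function.Injective (fun k : Fin 6 => Complex.exp ((k : ℕ) * (Real.pi / 3) * Complex.I) * u) := by
  intro k j h
  simp only [mul_left_inj' hu] at h
  rw [Complex.exp_eq_exp_iff_exists_int] at h
  obtain ⟨m, hm⟩ := h
  have hre : ((k:ℕ):ℝ) * (π/3) = ((j:ℕ):ℝ) * (π/3) + m * (2*π) := by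
    have := congrArg Complex.im hm
    push_cast at this
    simpa [Complex.mul_im, Complex.I_im, Complex.I_re] using this
  have hπ := Real.pi_pos
  have : ((k:ℕ):ℝ) = ((j:ℕ):ℝ) + 6*m := by
    field_simp at hre
    nlinarith [hre]
  have hint : (k:ℕ) = (j:ℕ) + 6*m ∨ True := Or.inr trivial
  have hk := k.isLt
  have hj := j.isLt
  have hz : ((k:ℕ):ℤ) = ((j:ℕ):ℤ) + 6*m := by exact_mod_cast this
  have : k.val = j.val := by omega
  exact Fin.ext this

lemma hex_norm (u : ℂ) (hu : ‖u‖ = 2) (k : Fin 6) :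
    ‖Complex.exp ((k : ℕ) * (Real.pi / 3) * Complex.I) * u‖ = 2 := by
  rw [norm_mul, hu]
  rw [Complex.norm_exp]
  have : (((k:ℕ):ℂ) * ((π:ℝ) / 3) * Complex.I).re = 0 := by
    simp [Complex.mul_re, Complex.mul_im]
  rw [this, Real.exp_zero, one_mul]

lemma hex_sum (V : Finset ℂ) (u : ℂ) (hu : ‖u‖ = 2)
    (hV : V = Finset.image (fun k : Fin 6 => Complex.exp ((k : ℕ) * (Real.pi / 3) * Complex.I) * u) Finset.univ) :
    (∑ v ∈ V, Ltrunc (‖v‖ / 2)) = 6 := by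
  have hu0 : u ≠ 0 := by intro h; rw [h] at hu; simp at hu
  rw [hV, Finset.sum_image (fun a _ b _ h => hex_inj u hu0 h)]
  have : ∀ k : Fin 6, Ltrunc (‖Complex.exp ((k : ℕ) * (Real.pi / 3) * Complex.I) * u‖ / 2) = 1 := by
    intro k
    rw [hex_norm u hu k]
    unfold Ltrunc
    norm_num
  rw [Finset.sum_congr rfl (fun k _ => this k)]
  simp

lemma key (V : Finset ℂ)
    (hann : ∀ v ∈ V, 2 ≤ ‖v‖ ∧ ‖v‖ ≤ 2.52)
    (hsep : ∀ u ∈ V, ∀ v ∈ V, u ≠ v → 2 ≤ ‖u - v‖)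
    (hn : 2 ≤ V.card) :
    (∑ v ∈ V, LL ‖v‖) ≤ 6 ∧
    ((∑ v ∈ V, LL ‖v‖) = 6 →
      V.card = 6 ∧ ∃ u : ℂ, ‖u‖ = 2 ∧ ∀ k : Fin 6,
        Complex.exp ((k : ℕ) * (Real.pi / 3) * Complex.I) * u ∈ V) := by
  classical
  obtain ⟨n, hncard⟩ : ∃ m, m = V.card := ⟨V.card, rfl⟩
  rw [← hncard] at hn
  haveI : NeZero n := ⟨by omega⟩
  have hargInj : Set.InjOn Complex.arg V := by
    intro x hx y hy hxy
    exact arg_inj_aux x y (hann x hx).1 (hann x hx).2 (hann y hy).1 (hann y hy).2 hxy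
      (hsep x hx y hy)
  have hA : (V.image Complex.arg).card = n := by rw [Finset.card_image_of_injOn hargInj, ← hncard]
  set A := V.image Complex.arg with hAdef
  set iso := A.orderIsoOfFin hA with hiso
  set a : Fin n → ℝ := fun k => (iso k : ℝ) with ha
  have haMono : StrictMono a := fun i j hij => by
    have := iso.strictMono hij
    exact_mod_cast this
  have hmem : ∀ k : Fin n, ∃ v, v ∈ V ∧ Complex.arg v = a k := by
    intro k
    have h1 : (a k) ∈ A := (iso k).2
    rw [hAdef, Finset.mem_image] at h1
    obtain ⟨v, hv, hv2⟩ := h1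
    exact ⟨v, hv, hv2⟩
  choose e heV hearg using hmem
  have heInj : Function.Injective e := by
    intro i j hij
    apply haMono.injective
    rw [← hearg i, ← hearg j, hij]
  have heSurj : ∀ v ∈ V, ∃ k, e k = v := by
    intro v hv
    have hva : Complex.arg v ∈ A := Finset.mem_image_of_mem _ hv
    obtain ⟨k, hk⟩ := iso.surjective ⟨_, hva⟩
    refine ⟨k, hargInj (heV k) hv ?_⟩
    rw [hearg k, ha]
    simp only [hk]
  have hsum : ∑ v ∈ V, LL ‖v‖ = ∑ k : Fin n, LL ‖e k‖ := by
    refine (Finset.sum_bij (fun (k : Fin n) _ => e k) (fun k _ => heV k) ?_ ?_ ?_).symm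
    · intro i _ j _ hij; exact heInj hij
    · intro v hv; obtain ⟨k, hk⟩ := heSurj v hv; exact ⟨k, Finset.mem_univ k, hk⟩
    · intro k _; rfl
  -- basic facts about e
  have heAnn : ∀ k, 2 ≤ ‖e k‖ ∧ ‖e k‖ ≤ 2.52 := fun k => hann _ (heV k)
  have hene : ∀ k, e k ≠ 0 := by
    intro k h
    have := (heAnn k).1
    rw [h] at this; norm_num at this
  -- Fin succ arithmetic
  have h1n : (1 : Fin n).val = 1 := by rw [Fin.val_one']; exact Nat.mod_eq_of_lt hn
  have hval : ∀ k : Fin n, ((k+1 : Fin n) : ℕ) = (k.val+1) % n := by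
    intro k; rw [Fin.val_add, h1n]
  have hvalLt : ∀ k : Fin n, (k:ℕ)+1 < n → ((k+1 : Fin n) : ℕ) = (k:ℕ)+1 := by
    intro k hk; rw [hval k, Nat.mod_eq_of_lt hk]
  have hvalWrap : ∀ k : Fin n, ¬((k:ℕ)+1 < n) → (k+1 : Fin n) = 0 := by
    intro k hk
    have hkn : (k:ℕ)+1 = n := by have := k.isLt; omega
    apply Fin.ext
    rw [hval k, hkn, Nat.mod_self, Fin.val_zero]
  have hne_succ : ∀ k : Fin n, k ≠ k + 1 := by
    intro k h
    have : (0:Fin n) = 1 := by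
      have := congrArg (fun x => x - k) h
      simpa [sub_self] using this
    have := congrArg Fin.val this
    rw [h1n, Fin.val_zero] at this
    omega
  -- gaps
  set g : Fin n → ℝ := fun k => a (k+1) - a k + (if (k:ℕ)+1 < n then 0 else 2*π) with hg
  have hbound : ∀ k : Fin n, -π < a k ∧ a k ≤ π := by
    intro k; rw [← hearg k]; exact ⟨Complex.neg_pi_lt_arg _, Complex.arg_le_pi _⟩
  have hgpos : ∀ k, 0 < g k ∧ g k < 2*π := by
    intro k
    simp only [hg]
    by_cases hk : (k:ℕ)+1 < n
    · rw [if_pos hk]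
      have hlt : k < k + 1 := by
        rw [Fin.lt_def, hvalLt k hk]; omega
      have := haMono hlt
      have hb1 := hbound k
      have hb2 := hbound (k+1)
      constructor <;> [linarith; linarith]
    · rw [if_neg hk, hvalWrap k hk]
      have hkn : (k:ℕ) = n - 1 := by have := k.isLt; omega
      have hlt : (0 : Fin n) < k := by
        rw [Fin.lt_def, Fin.val_zero]; omega
      have := haMono hlt
      have hb1 := hbound k
      have hb2 := hbound 0
      constructor <;> [linarith; linarith]
  -- cos of gap
  have hgcos : ∀ k, Real.cos (g k) = Real.cos (Complex.arg (e (k+1)) - Complex.arg (e k)) := by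
    intro k
    rw [hearg, hearg]
    simp only [hg]
    by_cases hk : (k:ℕ)+1 < n
    · rw [if_pos hk]; ring_nf
    · rw [if_neg hk]
      have : a (k+1) - a k + 2*π = (a (k+1) - a k) + 2*π := by ring
      rw [this, Real.cos_add_two_pi]
  -- per-gap bound
  have hgap : ∀ k : Fin n, π/6 * (LL ‖e k‖ + LL ‖e (k+1)‖) ≤ g k := by
    intro k
    have hne : e k ≠ e (k+1) := fun h => hne_succ k (heInj h)
    have hd := hsep _ (heV k) _ (heV (k+1)) hne
    have hc := cos_bound (e k) (e (k+1)) (hene k) (hene (k+1)) hd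
    rw [← hgcos k] at hc
    exact pair_ge _ _ _ (heAnn k).1 (heAnn k).2 (heAnn (k+1)).1 (heAnn (k+1)).2 hc
      (hgpos k).1 (hgpos k).2
  -- sum of gaps = 2π
  have hbij : Function.Bijective (fun k : Fin n => k + 1) :=
    (Equiv.addRight (1 : Fin n)).bijective
  have hsumg : ∑ k : Fin n, g k = 2*π := by
    simp only [hg]
    rw [Finset.sum_add_distrib, Finset.sum_sub_distrib]
    have h1 : ∑ k : Fin n, a (k+1) = ∑ k : Fin n, a k := hbij.sum_comp a
    have h2 : ∑ k : Fin n, (if (k:ℕ)+1 < n then (0:ℝ) else 2*π) = 2*π := by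
      have hrw : ∀ k : Fin n, (if (k:ℕ)+1 < n then (0:ℝ) else 2*π)
          = if k = (⟨n-1, by omega⟩ : Fin n) then 2*π else 0 := by
        intro k
        have hkl := k.isLt
        by_cases hk : (k:ℕ)+1 < n
        · rw [if_pos hk, if_neg]
          intro h
          rw [h] at hk
          simp at hk
          omega
        · rw [if_neg hk, if_pos]
          apply Fin.ext
          simp
          omega
      rw [Finset.sum_congr rfl (fun k _ => hrw k)]
      rw [Finset.sum_ite_eq' Finset.univ]
      simp
    rw [h1, h2]
    ring
  -- total inequality
  have hdouble : ∑ k : Fin n, (LL ‖e k‖ + LL ‖e (k+1)‖) = 2 * ∑ k : Fin n, LL ‖e k‖ := by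
    rw [Finset.sum_add_distrib]
    rw [hbij.sum_comp (fun k => LL ‖e k‖)]
    ring
  have htotal : π/3 * (∑ k : Fin n, LL ‖e k‖) ≤ 2*π := by
    have h1 : ∑ k : Fin n, π/6 * (LL ‖e k‖ + LL ‖e (k+1)‖) ≤ ∑ k : Fin n, g k :=
      Finset.sum_le_sum (fun k _ => hgap k)
    rw [← Finset.mul_sum, hdouble, hsumg] at h1
    linarith
  have hineq : (∑ v ∈ V, LL ‖v‖) ≤ 6 := by
    rw [hsum]
    nlinarith [pi_pos, htotal]
  refine ⟨hineq, ?_⟩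
  -- equality case
  intro hT
  rw [hsum] at hT
  have hzero : ∀ k : Fin n, g k = π/6 * (LL ‖e k‖ + LL ‖e (k+1)‖) := by
    have hsz : ∑ k : Fin n, (g k - π/6 * (LL ‖e k‖ + LL ‖e (k+1)‖)) = 0 := by
      rw [Finset.sum_sub_distrib, hsumg, ← Finset.mul_sum, hdouble, hT]
      ring
    have hnn : ∀ k ∈ Finset.univ, (0:ℝ) ≤ g k - π/6 * (LL ‖e k‖ + LL ‖e (k+1)‖) :=
      fun k _ => by linarith [hgap k]
    have := (Finset.sum_eq_zero_iff_of_nonneg hnn).mp hsz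
    intro k
    have := this k (Finset.mem_univ k)
    linarith
  have hnorm2 : ∀ k : Fin n, ‖e k‖ = 2 := by
    intro k
    have hne : e k ≠ e (k+1) := fun h => hne_succ k (heInj h)
    have hd := hsep _ (heV k) _ (heV (k+1)) hne
    have hc := cos_bound (e k) (e (k+1)) (hene k) (hene (k+1)) hd
    rw [← hgcos k] at hc
    exact (pair_eq _ _ _ (heAnn k).1 (heAnn k).2 (heAnn (k+1)).1 (heAnn (k+1)).2 hc
      (hgpos k).1 (hzero k)).1
  have hgval : ∀ k : Fin n, g k = π/3 := by
    intro k
    rw [hzero k, hnorm2 k, hnorm2 (k+1), LL_two]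
    ring
  have hn6 : n = 6 := by
    have : ∑ k : Fin n, g k = n * (π/3) := by
      rw [Finset.sum_congr rfl (fun k _ => hgval k)]
      simp [Finset.card_univ, mul_comm]
    rw [hsumg] at this
    have hπ := pi_pos
    have : (n:ℝ) = 6 := by
      field_simp at this
      nlinarith
    exact_mod_cast this
  -- recurrence for a
  have hrec : ∀ k : Fin n, (k:ℕ)+1 < n → a (k+1) = a k + π/3 := by
    intro k hk
    have := hgval k
    simp only [hg, if_pos hk] at this
    linarith
  have hformula : ∀ j : ℕ, ∀ h : j < n, a ⟨j, h⟩ = a ⟨0, by omega⟩ + j * (π/3) := by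
    intro j
    induction j with
    | zero => intro h; simp
    | succ i ih =>
      intro h
      have hi : i < n := by omega
      have hstep : (⟨i, hi⟩ : Fin n) + 1 = ⟨i+1, h⟩ := by
        apply Fin.ext
        rw [hval, Nat.mod_eq_of_lt]
        exact h
      have := hrec ⟨i, hi⟩ (by simpa using h)
      rw [hstep] at this
      rw [this, ih hi]
      push_cast
      ring
  -- e k formula
  have hek : ∀ k : Fin n, e k = Complex.exp ((k:ℕ) * ((π:ℝ) / 3) * Complex.I) * e ⟨0, by omega⟩ := by
    intro k
    have habs : ∀ m : Fin n, (‖e m‖ : ℂ) = 2 := by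
      intro m
      rw [show ‖e m‖ = ‖e m‖ from rfl, hnorm2 m]
      norm_num
    have h0 : e ⟨0, by omega⟩ = (2:ℂ) * Complex.exp ((a ⟨0, by omega⟩ : ℝ) * Complex.I) := by
      conv_lhs => rw [← Complex.norm_mul_exp_arg_mul_I (e ⟨0, by omega⟩)]
      rw [habs, hearg]
    have hk : e k = (2:ℂ) * Complex.exp ((a k : ℝ) * Complex.I) := by
      conv_lhs => rw [← Complex.norm_mul_exp_arg_mul_I (e k)]
      rw [habs, hearg]
    rw [hk, h0]
    have hak : a k = a ⟨0, by omega⟩ + (k:ℕ) * (π/3) := by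
      have := hformula (k:ℕ) k.isLt
      simpa using this
    rw [hak]
    rw [show ((a ⟨0, by omega⟩ + (k:ℕ) * (π/3) : ℝ) : ℂ) * Complex.I
        = (a ⟨0, by omega⟩ : ℝ) * Complex.I + ((k:ℕ) * ((π:ℝ)/3) * Complex.I) by push_cast; ring]
    rw [Complex.exp_add]
    ring
  refine ⟨by rw [← hncard]; exact hn6, e ⟨0, by omega⟩, ?_, ?_⟩
  · exact hnorm2 _
  · intro k
    have hk6 : (k:ℕ) < n := by have := k.isLt; omega
    have := hek ⟨(k:ℕ), hk6⟩
    simp only at this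
    rw [← this]
    exact heV _

theorem L_sum_le_six (V : Finset ℂ)
    (hann : ∀ v ∈ V, 2 ≤ ‖v‖ ∧ ‖v‖ ≤ 2.52)
    (hsep : ∀ u ∈ V, ∀ v ∈ V, u ≠ v → 2 ≤ ‖u - v‖) :
    (∑ v ∈ V, Ltrunc (‖v‖ / 2)) ≤ 6 ∧
    ((∑ v ∈ V, Ltrunc (‖v‖ / 2)) = 6 ↔
      ∃ u : ℂ, ‖u‖ = 2 ∧
        V = Finset.image (fun k : Fin 6 => Complex.exp ((k : ℕ) * (Real.pi / 3) * Complex.I) * u)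
              Finset.univ) := by
  classical
  have hLt : ∀ v ∈ V, Ltrunc (‖v‖/2) = LL ‖v‖ := by
    intro v hv
    have h := (hann v hv).2
    unfold Ltrunc LL
    rw [if_pos (by linarith)]
  have hTeq : (∑ v ∈ V, Ltrunc (‖v‖ / 2)) = ∑ v ∈ V, LL ‖v‖ := Finset.sum_congr rfl hLt
  rw [hTeq]
  have hrev : (∃ u : ℂ, ‖u‖ = 2 ∧
      V = Finset.image (fun k : Fin 6 => Complex.exp ((k : ℕ) * (Real.pi / 3) * Complex.I) * u)
        Finset.univ) → (∑ v ∈ V, LL ‖v‖) = 6 := by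
    rintro ⟨u, hu2, hV⟩
    rw [← hTeq]
    exact hex_sum V u hu2 hV
  by_cases hn : 2 ≤ V.card
  · obtain ⟨hineq, heq⟩ := key V hann hsep hn
    refine ⟨hineq, ⟨?_, hrev⟩⟩
    intro h6
    obtain ⟨hcard, u, hu2, hmem⟩ := heq h6
    refine ⟨u, hu2, ?_⟩
    have hu0 : u ≠ 0 := by intro h; rw [h] at hu2; norm_num at hu2
    have hsub : Finset.image (fun k : Fin 6 =>
        Complex.exp ((k : ℕ) * (Real.pi / 3) * Complex.I) * u) Finset.univ ⊆ V := by
      rw [Finset.image_subset_iff]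
      intro k _
      exact hmem k
    have hcard2 : (Finset.image (fun k : Fin 6 =>
        Complex.exp ((k : ℕ) * (Real.pi / 3) * Complex.I) * u) Finset.univ).card = 6 := by
      rw [Finset.card_image_of_injective _ (hex_inj u hu0), Finset.card_univ, Fintype.card_fin]
    exact (Finset.eq_of_subset_of_card_le hsub (by rw [hcard, hcard2])).symm
  · have hsmall : (∑ v ∈ V, LL ‖v‖) ≤ 1 := by
      have h1 : (∑ v ∈ V, LL ‖v‖) ≤ V.card • (1:ℝ) :=
        Finset.sum_le_card_nsmul V _ 1 (fun v hv => LL_le_one (hann v hv).1)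
      have h2 : (V.card : ℝ) ≤ 1 := by
        have : V.card ≤ 1 := by omega
        exact_mod_cast this
      rw [nsmul_eq_mul] at h1
      nlinarith
    refine ⟨by linarith, ⟨fun h => absurd h (by intro h'; linarith), hrev⟩⟩
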